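/- Under the same hypotheses, I₃(T) = T²H - T(XX' + YY') + (X² + Y²)/2 is a first integral of the conservative Ermakov system: dI₃/dT = 0. -/

import Mathlib

/-- I₃ = T²H - T(XX'+YY') + (X²+Y²)/2 is a first integral of the
conservative Ermakov system. -/
theorem ermakov_I3_first_integral
    (N N' : ℝ → ℝ) (X Y X' Y' : ℝ → ℝ)
    (hN : ∀ u, HasDerivAt N (N' u) u)
    (hX0 : ∀ T, X T ≠ 0)
    (hX : ∀ T, HasDerivAt X (X' T) T)
    (hY : ∀ T, HasDerivAt Y (Y' T) T)
    (hX' : ∀ T, HasDerivAt X'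
      ((2 * N (Y T / X T) + (Y T / X T) * N' (Y T / X T)) / (X T)^3) T)
    (hY' : ∀ T, HasDerivAt Y' (-N' (Y T / X T) / (X T)^3) T) :
    ∀ T, deriv (fun s =>
      s^2 * ((1/2) * ((X' s)^2 + (Y' s)^2) + N (Y s / X s) / (X s)^2)
      - s * (X s * X' s + Y s * Y' s)
      + (X s^2 + Y s^2) / 2) T = 0 := by
  intro T
  set u := Y T / X T with hu_def
  set A := (2 * N u + u * N' u) / (X T)^3 with hA
  set B := -N' u / (X T)^3 with hB
  have hu : HasDerivAt (fun s => Y s / X s)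
      ((Y' T * X T - Y T * X' T) / (X T)^2) T := (hY T).div (hX T) (hX0 T)
  have hNu : HasDerivAt (fun s => N (Y s / X s))
      (N' u * ((Y' T * X T - Y T * X' T) / (X T)^2)) T := (hN u).comp T hu
  have hX2 : HasDerivAt (fun s => (X s)^2) (2 * X T * X' T) T := by
    simpa [mul_comm] using (hX T).fun_pow 2
  have hNd : HasDerivAt (fun s => N (Y s / X s) / (X s)^2)
      ((N' u * ((Y' T * X T - Y T * X' T) / (X T)^2) * (X T)^2
        - N u * (2 * X T * X' T)) / ((X T)^2)^2) T :=
    hNu.div hX2 (pow_ne_zero 2 (hX0 T))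
  have hKin : HasDerivAt (fun s => (1/2 : ℝ) * ((X' s)^2 + (Y' s)^2))
      ((1/2 : ℝ) * (2 * X' T * A + 2 * Y' T * B)) T := by
    have h1 : HasDerivAt (fun s => (X' s)^2) (2 * X' T * A) T := by
      have := (hX' T).fun_pow 2
      rw [hA, hu_def]; refine this.congr_deriv ?_; ring
    have h2 : HasDerivAt (fun s => (Y' s)^2) (2 * Y' T * B) T := by
      have := (hY' T).fun_pow 2
      rw [hB, hu_def]; refine this.congr_deriv ?_; ring
    exact (h1.add h2).const_mul _
  have hH : HasDerivAt
      (fun s => (1/2 : ℝ) * ((X' s)^2 + (Y' s)^2) + N (Y s / X s) / (X s)^2)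
      ((1/2 : ℝ) * (2 * X' T * A + 2 * Y' T * B)
        + (N' u * ((Y' T * X T - Y T * X' T) / (X T)^2) * (X T)^2
          - N u * (2 * X T * X' T)) / ((X T)^2)^2) T := hKin.add hNd
  have hs2 : HasDerivAt (fun s : ℝ => s^2) (2 * T) T := by
    simpa [mul_comm] using (hasDerivAt_id T).fun_pow 2
  have hT1 : HasDerivAt (fun s : ℝ => s^2 *
      ((1/2 : ℝ) * ((X' s)^2 + (Y' s)^2) + N (Y s / X s) / (X s)^2))
      (2 * T * ((1/2 : ℝ) * ((X' T)^2 + (Y' T)^2) + N u / (X T)^2)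
        + T^2 * ((1/2 : ℝ) * (2 * X' T * A + 2 * Y' T * B)
          + (N' u * ((Y' T * X T - Y T * X' T) / (X T)^2) * (X T)^2
            - N u * (2 * X T * X' T)) / ((X T)^2)^2)) T := hs2.mul hH
  have hG : HasDerivAt (fun s => X s * X' s + Y s * Y' s)
      (X' T * X' T + X T * A + (Y' T * Y' T + Y T * B)) T :=
    ((hX T).mul (hX' T)).add ((hY T).mul (hY' T))
  have hT2 : HasDerivAt (fun s : ℝ => s * (X s * X' s + Y s * Y' s))
      (1 * (X T * X' T + Y T * Y' T)
        + T * (X' T * X' T + X T * A + (Y' T * Y' T + Y T * B))) T :=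
    (hasDerivAt_id T).mul hG
  have hT3 : HasDerivAt (fun s => (X s^2 + Y s^2) / 2)
      ((2 * X T * X' T + 2 * Y T * Y' T) / 2) T := by
    have hY2 : HasDerivAt (fun s => (Y s)^2) (2 * Y T * Y' T) T := by
      simpa [mul_comm] using (hY T).fun_pow 2
    exact (hX2.add hY2).div_const 2
  have hF := (hT1.fun_sub hT2).fun_add hT3
  have : HasDerivAt (fun s =>
      s^2 * ((1/2) * ((X' s)^2 + (Y' s)^2) + N (Y s / X s) / (X s)^2)
      - s * (X s * X' s + Y s * Y' s)
      + (X s^2 + Y s^2) / 2) 0 T := by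
    refine hF.congr_deriv ?_
    rw [hA, hB, hu_def]
    field_simp [hX0 T]
    ring
  rw [this.deriv]
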